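/- arXiv:1410.6596 — 5 statements merged into one kernel-verified Lean document; each statement's English description precedes it below -/
import Mathlib

section
/- For any nonempty set X and any multivalued map F : X → Set X, the set of fixed points of F equals the intersection, over all covers (O_ι)_{ι∈I} of X (families of subsets with ⋃_ι O_ι = X), of the unions ⋃_{ι∈I} F̂(O_ι). That is, Fix(F) = ⋂_{covers (O_ι)} ⋃_ι F̂(O_ι). -/
theorem fix_eq_iInter_covers (X : Type*) [Nonempty X] (F : X → Set X) :
    {x | x ∈ F x} =
      ⋂ C ∈ {C : Set (Set X) | ⋃₀ C = Set.univ}, ⋃ O ∈ C, (⋃ y ∈ O, F y) ∩ O := by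
  ext x
  simp only [Set.mem_setOf_eq, Set.mem_iInter, Set.mem_iUnion, Set.mem_inter_iff]
  constructor
  · intro hx C hC
    have : x ∈ ⋃₀ C := by rw [hC]; trivial
    obtain ⟨O, hO, hxO⟩ := this
    exact ⟨O, hO, ⟨x, hxO, hx⟩, hxO⟩
  · intro h
    by_contra hx
    have hC : ⋃₀ ({{x}, {x}ᶜ} : Set (Set X)) = Set.univ := by
      ext z; simp [Classical.em]
    obtain ⟨O, hO, ⟨y, hy, hfy⟩, hxO⟩ := h _ hC
    rcases hO with rfl | rfl
    · exact hx (Set.eq_of_mem_singleton hy ▸ hfy)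
    · exact hxO rfl
end

section
/- Let X be a compact Hausdorff topological space and F : X → Set X a multivalued map with closed graph (i.e., {(x,y) | y ∈ F(x)} is closed in X × X). Then Fix(F) = ⋂ ⋃_{ι∈I} F̂(O_ι), where the intersection is taken over all finite open covers (O_ι)_{ι∈I} of X. -/
theorem fix_eq_iInter_finite_open_covers (X : Type*) [TopologicalSpace X]
    [CompactSpace X] [T2Space X] (F : X → Set X)
    (hF : IsClosed {p : X × X | p.2 ∈ F p.1}) :
    {x | x ∈ F x} =
      ⋂ C ∈ {C : Set (Set X) | C.Finite ∧ (∀ O ∈ C, IsOpen O) ∧ ⋃₀ C = Set.univ},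
        ⋃ O ∈ C, (⋃ y ∈ O, F y) ∩ O := by
  ext x
  simp only [Set.mem_setOf_eq, Set.mem_iInter]
  constructor
  · rintro hx C ⟨hfin, hopen, hcov⟩
    have hxC : x ∈ ⋃₀ C := hcov ▸ Set.mem_univ x
    obtain ⟨O, hO, hxO⟩ := hxC
    exact Set.mem_biUnion hO ⟨Set.mem_biUnion hxO hx, hxO⟩
  · intro h
    by_contra hx
    have hopen : IsOpen {p : X × X | p.2 ∈ F p.1}ᶜ := hF.isOpen_compl
    obtain ⟨U, V, hU, hV, hxU, hxV, hUV⟩ := isOpen_prod_iff.1 hopen x x hx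
    have hC : ({U ∩ V, {x}ᶜ} : Set (Set X)) ∈
        {C : Set (Set X) | C.Finite ∧ (∀ O ∈ C, IsOpen O) ∧ ⋃₀ C = Set.univ} := by
      refine ⟨(Set.finite_singleton _).insert _, ?_, ?_⟩
      · rintro O (rfl | rfl)
        · exact hU.inter hV
        · exact isOpen_compl_singleton
      · ext z
        simp only [Set.mem_sUnion, Set.mem_univ, iff_true]
        by_cases hz : z = x
        · exact ⟨U ∩ V, Or.inl rfl, hz ▸ ⟨hxU, hxV⟩⟩
        · exact ⟨{x}ᶜ, Or.inr rfl, hz⟩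
    have := h _ hC
    simp only [Set.mem_iUnion, Set.mem_inter_iff, Set.mem_insert_iff,
      Set.mem_singleton_iff, exists_prop] at this
    obtain ⟨O, (rfl | rfl), ⟨⟨y, hyO, hxy⟩, hxO⟩⟩ := this
    · exact hUV (Set.mk_mem_prod hyO.1 hxO.2) hxy
    · exact hxO rfl
end

section
/- Let X be a compact Hausdorff topological space and F : X → Set X a multivalued map with closed graph. Then Fix(F) is nonempty if and only if for every finite closed cover (O_ι)_{ι∈I} of X there exists ι with F̂(O_ι) ≠ ∅, i.e., there exist x, x' ∈ O_ι with x' ∈ F(x). -/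
theorem fix_nonempty_iff_finite_closed_covers (X : Type*) [TopologicalSpace X]
    [CompactSpace X] [T2Space X] (F : X → Set X)
    (hF : IsClosed {p : X × X | p.2 ∈ F p.1}) :
    {x | x ∈ F x}.Nonempty ↔
      ∀ C : Set (Set X), C.Finite → (∀ O ∈ C, IsClosed O) → ⋃₀ C = Set.univ →
        ∃ O ∈ C, ∃ x ∈ O, ∃ x' ∈ O, x' ∈ F x := by
  constructor
  · rintro ⟨x, hx⟩ C _ _ hcov
    have hxU : x ∈ ⋃₀ C := hcov ▸ Set.mem_univ x
    obtain ⟨O, hO, hxO⟩ := hxU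
    exact ⟨O, hO, x, hxO, x, hxO, hx⟩
  · intro h
    by_contra hne
    have hnofix : ∀ x : X, x ∉ F x := by
      intro x hx
      exact hne ⟨x, hx⟩
    -- for each x, find a closed neighborhood K x such that no y,z ∈ K x has z ∈ F y
    have key : ∀ x : X, ∃ K : Set X, K ∈ nhds x ∧ IsClosed K ∧
        ∀ y ∈ K, ∀ z ∈ K, z ∉ F y := by
      intro x
      have hxg : (x, x) ∈ {p : X × X | p.2 ∈ F p.1}ᶜ := hnofix x
      obtain ⟨u, v, hu, hv, hxu, hxv, huv⟩ :=
        isOpen_prod_iff.mp hF.isOpen_compl x x hxg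
      have hW : u ∩ v ∈ nhds x :=
        Filter.inter_mem (hu.mem_nhds hxu) (hv.mem_nhds hxv)
      obtain ⟨K, hKn, hKc, hKsub⟩ := exists_mem_nhds_isClosed_subset hW
      refine ⟨K, hKn, hKc, ?_⟩
      intro y hy z hz hzy
      exact huv (Set.mk_mem_prod (hKsub hy).1 (hKsub hz).2) hzy
    choose K hKn hKc hKprop using key
    obtain ⟨t, -, hcov⟩ := IsCompact.elim_nhds_subcover isCompact_univ K
      (fun x _ => hKn x)
    obtain ⟨O, hO, x, hxO, x', hx'O, hfix⟩ :=
      h (K '' t) ((t.finite_toSet).image K)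
        (by rintro O ⟨a, -, rfl⟩; exact hKc a)
        (by
          apply Set.eq_univ_of_univ_subset
          intro z hz
          obtain ⟨a, ha, hza⟩ := Set.mem_iUnion₂.mp (hcov hz)
          exact ⟨K a, ⟨a, ha, rfl⟩, hza⟩)
    obtain ⟨a, -, rfl⟩ := hO
    exact hKprop a x hxO x' hx'O hfix
end

section
/- Let X be a compact Hausdorff space and f : X → X a continuous function. Then f has a fixed point if and only if for every finite closed cover (O_ι)_{ι∈I} of X there exists an index ι and points x, x' ∈ O_ι with f(x) = x'. -/
theorem fixedPoint_iff_finite_closed_covers (X : Type*) [TopologicalSpace X]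
    [CompactSpace X] [T2Space X] (f : X → X) (hf : Continuous f) :
    (∃ x, f x = x) ↔
      ∀ C : Set (Set X), C.Finite → (∀ O ∈ C, IsClosed O) → ⋃₀ C = Set.univ →
        ∃ O ∈ C, ∃ x ∈ O, ∃ x' ∈ O, f x = x' := by
  constructor
  · rintro ⟨x, hx⟩ C _ _ hcov
    have hxU : x ∈ ⋃₀ C := hcov ▸ Set.mem_univ x
    obtain ⟨O, hO, hxO⟩ := hxU
    exact ⟨O, hO, x, hxO, x, hxO, hx⟩
  · intro h
    by_contra hfix
    push_neg at hfix
    -- for each x, find an open neighborhood W x with f (W x) disjoint from W x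
    have key : ∀ x : X, ∃ W : Set X, IsOpen W ∧ x ∈ W ∧
        ∀ a ∈ W, ∀ b ∈ W, f a ≠ b := by
      intro x
      obtain ⟨U, V, hU, hV, hxU, hfxV, hUV⟩ := t2_separation (fun e => hfix x e.symm)
      refine ⟨U ∩ f ⁻¹' V, hU.inter (hV.preimage hf), ⟨hxU, hfxV⟩, ?_⟩
      rintro a ⟨_, haV⟩ b ⟨hbU, _⟩ rfl
      exact hUV.le_bot ⟨hbU, haV⟩
    choose W hWopen hWmem hWsep using key
    -- shrink to closed neighborhoods
    have key2 : ∀ x : X, ∃ K : Set X, K ∈ nhds x ∧ IsClosed K ∧ K ⊆ W x := by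
      intro x
      exact exists_mem_nhds_isClosed_subset ((hWopen x).mem_nhds (hWmem x))
    choose K hKnhds hKclosed hKsub using key2
    obtain ⟨t, -, ht⟩ := CompactSpace.isCompact_univ.elim_nhds_subcover K (fun x _ => hKnhds x)
    obtain ⟨O, hO, x, hxO, x', hx'O, hfx⟩ := h (K '' t) (t.finite_toSet.image K)
      (by rintro O ⟨y, _, rfl⟩; exact hKclosed y)
      (by
        apply Set.eq_univ_of_univ_subset
        intro z hz
        obtain ⟨y, hyt, hzy⟩ := Set.mem_iUnion₂.mp (ht (Set.mem_univ z))
        exact ⟨K y, ⟨y, hyt, rfl⟩, hzy⟩)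
    obtain ⟨y, _, rfl⟩ := hO
    exact hWsep y x (hKsub y hxO) x' (hKsub y hx'O) hfx
end

section
/- Let X be a compact metric space, F : X → Set X a map with closed graph, and for each k ∈ ℕ let (O_{kι})_{ι∈I_k} be a finite cover of X by closed (or open) sets each of diameter at most δ_k, where δ_k > 0 and δ_k → 0. Then Fix(F) = ⋂_{k∈ℕ} ⋃_{ι∈I_k} F̂(O_{kι}). -/
theorem fix_eq_iInter_small_covers (X : Type*) [MetricSpace X] [CompactSpace X]
    (F : X → Set X) (hF : IsClosed {p : X × X | p.2 ∈ F p.1})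
    (I : ℕ → Type*) [∀ k, Finite (I k)] (O : (k : ℕ) → I k → Set X) (δ : ℕ → ℝ)
    (hδpos : ∀ k, 0 < δ k)
    (hδ : Filter.Tendsto δ Filter.atTop (nhds 0))
    (hcov : ∀ k, ⋃ i, O k i = Set.univ)
    (hoc : ∀ k, (∀ i, IsClosed (O k i)) ∨ (∀ i, IsOpen (O k i)))
    (hdiam : ∀ k, ∀ i, Metric.diam (O k i) ≤ δ k) :
    {x | x ∈ F x} = ⋂ k : ℕ, ⋃ i : I k, (⋃ y ∈ O k i, F y) ∩ O k i := by
  ext x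
  simp only [Set.mem_setOf_eq, Set.mem_iInter, Set.mem_iUnion, Set.mem_inter_iff]
  constructor
  · intro hx k
    have : x ∈ ⋃ i, O k i := (hcov k) ▸ Set.mem_univ x
    obtain ⟨i, hi⟩ := Set.mem_iUnion.mp this
    exact ⟨i, ⟨x, hi, hx⟩, hi⟩
  · intro h
    choose i h1 hxO using h
    choose y hyO hxF using h1
    have hdist : ∀ k, dist (y k) x ≤ δ k := fun k =>
      le_trans (Metric.dist_le_diam_of_mem Metric.isBounded_of_compactSpace
        (hyO k) (hxO k)) (hdiam k (i k))
    have hty : Filter.Tendsto y Filter.atTop (nhds x) := by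
      rw [tendsto_iff_dist_tendsto_zero]
      exact squeeze_zero (fun k => dist_nonneg) hdist hδ
    have : Filter.Tendsto (fun k => ((y k, x) : X × X)) Filter.atTop (nhds (x, x)) :=
      hty.prodMk_nhds tendsto_const_nhds
    exact hF.mem_of_tendsto this (Filter.Eventually.of_forall fun k => hxF k)
end
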